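/- Let q > p > 2 and let V ∈ C([0,1]) ∩ C^2((0,1)) solve (|V'|^{p-2}V')' + |V'|^q = 0 on (0,1) with V(0) = 0 and V(1) = 0. Then V ≡ 0 on [0,1]. -/

import Mathlib

open Set

open Real Filter

lemma phi_hasDerivAt {p : ℝ} (hp : 2 < p) (t : ℝ) :
    HasDerivAt (fun s : ℝ => |s| ^ (p - 2) * s) ((p - 1) * |t| ^ (p - 2)) t := by
  rcases lt_trichotomy t 0 with ht | rfl | ht
  · -- t < 0 : φ s = -(-s)^(p-1) near t
    have h1 : HasDerivAt (fun s : ℝ => -((-s) ^ (p - 1))) ((p - 1) * |t| ^ (p - 2)) t := by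
      have hneg : HasDerivAt (fun s : ℝ => -s) (-1 : ℝ) t := (hasDerivAt_id t).neg
      have houter : HasDerivAt (fun x : ℝ => x ^ (p - 1)) ((p - 1) * (-t) ^ (p - 1 - 1)) (-t) :=
        Real.hasDerivAt_rpow_const (Or.inl (by linarith))
      have : HasDerivAt (fun s : ℝ => -((-s) ^ (p - 1))) (-((p - 1) * (-t) ^ (p - 1 - 1) * -1)) t :=
        (houter.comp t hneg).neg
      convert this using 1
      rw [abs_of_neg ht]
      ring_nf
    apply h1.congr_of_eventuallyEq
    filter_upwards [Iio_mem_nhds ht] with s hs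
    have hs' : (0:ℝ) < -s := by simpa using hs
    rw [abs_of_neg hs, show (-s:ℝ)^(p-1) = (-s)^(p-2) * (-s) by
      rw [show p - 1 = (p-2) + 1 by ring, Real.rpow_add hs', Real.rpow_one]]
    ring
  · -- t = 0
    have : HasDerivAt (fun s : ℝ => |s| ^ (p - 2) * s) 0 0 := by
      rw [hasDerivAt_iff_tendsto_slope]
      have hcont : Tendsto (fun s : ℝ => |s| ^ (p - 2)) (nhdsWithin (0:ℝ) {(0:ℝ)}ᶜ) (nhds 0) := by
        have h0 : ContinuousAt (fun x : ℝ => x ^ (p - 2)) 0 :=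
          Real.continuousAt_rpow_const 0 (p-2) (Or.inr (by linarith))
        have h0' : ContinuousAt (fun x : ℝ => x ^ (p - 2)) |(0:ℝ)| := by
          rw [abs_zero]; exact h0
        have := h0'.comp (continuous_abs.continuousAt (x := (0:ℝ)))
        have h00 : |(0:ℝ)| ^ (p-2) = 0 := by
          simp [Real.zero_rpow (by linarith : p - 2 ≠ 0)]
        simp only [Function.comp_def, abs_zero,
          Real.zero_rpow (by linarith : p - 2 ≠ 0)] at this
        have := this.mono_left (nhdsWithin_le_nhds (s := {(0:ℝ)}ᶜ))
        simpa [Real.zero_rpow (by linarith : p - 2 ≠ 0)] using this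
      apply hcont.congr'
      filter_upwards [self_mem_nhdsWithin] with s hs
      have hs0 : s ≠ 0 := hs
      simp [slope_def_field, div_eq_iff hs0]
      field_simp
    simpa [Real.zero_rpow (by linarith : p - 2 ≠ 0)] using this
  · -- t > 0 : φ s = s^(p-1) near t
    have h1 : HasDerivAt (fun s : ℝ => s ^ (p - 1)) ((p - 1) * |t| ^ (p - 2)) t := by
      have := Real.hasDerivAt_rpow_const (x := t) (p := p - 1) (Or.inl (ne_of_gt ht))
      convert this using 2
      rw [abs_of_pos ht]; ring_nf
    apply h1.congr_of_eventuallyEq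
    filter_upwards [Ioi_mem_nhds ht] with s hs
    rw [abs_of_pos hs, show s^(p-2) * s = s^(p-2) * s^(1:ℝ) by rw [Real.rpow_one],
      ← Real.rpow_add hs]
    ring_nf

theorem stmt_4 (p q : ℝ) (hp : 2 < p) (hq : p < q)
    (V : ℝ → ℝ)
    (hVcont : ContinuousOn V (Set.Icc 0 1))
    (hVC2 : ContDiffOn ℝ 2 V (Set.Ioo 0 1))
    (heq : ∀ x ∈ Set.Ioo (0 : ℝ) 1,
      deriv (fun y => |deriv V y| ^ (p - 2) * deriv V y) x + |deriv V x| ^ q = 0)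
    (hV0 : V 0 = 0) (hV1 : V 1 = 0) :
    ∀ x ∈ Set.Icc (0 : ℝ) 1, V x = 0 := by
  have hp2 : (0:ℝ) < p - 2 := by linarith
  have hq0 : (0:ℝ) < q := by linarith
  set u := deriv V with hu
  set g : ℝ → ℝ := fun y => |u y| ^ (p - 2) * u y with hgdef
  have hopen : IsOpen (Ioo (0:ℝ) 1) := isOpen_Ioo
  have hu1 : ContDiffOn ℝ 1 u (Ioo 0 1) := hVC2.deriv_of_isOpen hopen (by norm_num)
  have huDiffAt : ∀ x ∈ Ioo (0:ℝ) 1, DifferentiableAt ℝ u x := fun x hx =>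
    (hu1.differentiableOn (by norm_num)).differentiableAt (hopen.mem_nhds hx)
  have hucont : ContinuousOn u (Ioo 0 1) := hu1.continuousOn
  have hVdiffAt : ∀ x ∈ Ioo (0:ℝ) 1, HasDerivAt V (u x) x := fun x hx =>
    ((hVC2.differentiableOn (by norm_num)).differentiableAt (hopen.mem_nhds hx)).hasDerivAt
  -- derivative of g
  have hg : ∀ x ∈ Ioo (0:ℝ) 1, HasDerivAt g (-(|u x| ^ q)) x := by
    intro x hx
    have h1 : HasDerivAt g ((p - 1) * |u x| ^ (p - 2) * deriv u x) x := by
      have := (phi_hasDerivAt hp (u x)).comp x ((huDiffAt x hx).hasDerivAt)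
      simpa [hgdef, Function.comp_def, mul_assoc] using this
    have h2 := heq x hx
    have h3 : deriv g x = (p - 1) * |u x| ^ (p - 2) * deriv u x := h1.deriv
    rw [h3] at h2
    convert h1 using 1
    linarith
  -- norm identity
  have habs : ∀ y, |g y| = |u y| ^ (p - 1) := by
    intro y
    rcases eq_or_ne (u y) 0 with h | h
    · simp [hgdef, h, Real.zero_rpow (ne_of_gt hp2),
        Real.zero_rpow (show p - 1 ≠ 0 by linarith)]
    · have h0 : 0 < |u y| := abs_pos.mpr h
      rw [hgdef]
      simp only []
      rw [abs_mul, abs_of_nonneg (Real.rpow_nonneg (abs_nonneg _) _),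
        show p - 1 = (p - 2) + 1 by ring, Real.rpow_add h0, Real.rpow_one]
  -- the bound machinery on a compact subinterval
  have bound : ∀ a b : ℝ, a ∈ Ioo (0:ℝ) 1 → b ∈ Ioo (0:ℝ) 1 → a ≤ b →
      ∃ K : ℝ, ∀ y ∈ Icc a b, |u y| ^ q ≤ K * |g y| := by
    intro a b ha hb hab
    have hsub : Icc a b ⊆ Ioo 0 1 := fun y hy =>
      ⟨lt_of_lt_of_le ha.1 hy.1, lt_of_le_of_lt hy.2 hb.2⟩
    obtain ⟨C, hC⟩ := isCompact_Icc.exists_bound_of_continuousOn (hucont.mono hsub)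
    refine ⟨(max C 1) ^ (q - p + 1), fun y hy => ?_⟩
    have hC' : |u y| ≤ max C 1 := by
      have := hC y hy
      rw [Real.norm_eq_abs] at this
      exact this.trans (le_max_left _ _)
    rw [habs]
    rcases eq_or_ne (u y) 0 with h | h
    · rw [h]
      simp [Real.zero_rpow hq0.ne', Real.zero_rpow (show p - 1 ≠ 0 by linarith)]
    · have h0 : 0 < |u y| := abs_pos.mpr h
      calc |u y| ^ q = |u y| ^ (q - p + 1) * |u y| ^ (p - 1) := by
            rw [← Real.rpow_add h0]; ring_nf
        _ ≤ (max C 1) ^ (q - p + 1) * |u y| ^ (p - 1) := by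
            apply mul_le_mul_of_nonneg_right _ (Real.rpow_nonneg (abs_nonneg _) _)
            exact Real.rpow_le_rpow (abs_nonneg _) hC' (by linarith)
  -- forward propagation of zero of g
  have fwd : ∀ a b : ℝ, a ∈ Ioo (0:ℝ) 1 → b ∈ Ioo (0:ℝ) 1 → a ≤ b → g a = 0 → g b = 0 := by
    intro a b ha hb hab hga
    have hsub : Icc a b ⊆ Ioo 0 1 := fun y hy =>
      ⟨lt_of_lt_of_le ha.1 hy.1, lt_of_le_of_lt hy.2 hb.2⟩
    obtain ⟨K, hK⟩ := bound a b ha hb hab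
    have hcont : ContinuousOn g (Icc a b) := fun y hy =>
      ((hg y (hsub hy)).continuousAt).continuousWithinAt
    have hgr := norm_le_gronwallBound_of_norm_deriv_right_le (δ := 0) (ε := 0) hcont
      (fun y hy => (hg y (hsub (Ico_subset_Icc_self hy))).hasDerivWithinAt)
      (by rw [Real.norm_eq_abs, hga, abs_zero])
      (fun y hy => by
        rw [Real.norm_eq_abs, Real.norm_eq_abs, abs_neg,
          abs_of_nonneg (Real.rpow_nonneg (abs_nonneg _) q), add_zero]
        exact hK y (Ico_subset_Icc_self hy))
    have hb2 := hgr b (right_mem_Icc.mpr hab)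
    rw [gronwallBound_ε0_δ0, Real.norm_eq_abs] at hb2
    exact abs_eq_zero.mp (le_antisymm hb2 (abs_nonneg _))
  -- backward propagation of zero of g
  have bwd : ∀ a b : ℝ, a ∈ Ioo (0:ℝ) 1 → b ∈ Ioo (0:ℝ) 1 → a ≤ b → g b = 0 → g a = 0 := by
    intro a b ha hb hab hgb
    have hsub : Icc a b ⊆ Ioo 0 1 := fun y hy =>
      ⟨lt_of_lt_of_le ha.1 hy.1, lt_of_le_of_lt hy.2 hb.2⟩
    obtain ⟨K, hK⟩ := bound a b ha hb hab
    set h : ℝ → ℝ := fun t => g (a + b - t) with hhdef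
    have hmem : ∀ t ∈ Icc a b, a + b - t ∈ Icc a b := fun t ht =>
      ⟨by linarith [ht.2], by linarith [ht.1]⟩
    have hderiv : ∀ t ∈ Ico a b, HasDerivAt h (|u (a + b - t)| ^ q) t := by
      intro t ht
      have hm : a + b - t ∈ Ioo 0 1 := hsub (hmem t (Ico_subset_Icc_self ht))
      have hinner : HasDerivAt (fun t : ℝ => a + b - t) (-1) t :=
        (hasDerivAt_id t).const_sub (a + b)
      have := (hg _ hm).comp t hinner
      simpa [hhdef, Function.comp_def] using this
    have hcont : ContinuousOn h (Icc a b) := by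
      intro t ht
      have hm : a + b - t ∈ Ioo 0 1 := hsub (hmem t ht)
      exact (((hg _ hm).continuousAt).comp
        ((continuous_const.sub continuous_id).continuousAt)).continuousWithinAt
    have hgr := norm_le_gronwallBound_of_norm_deriv_right_le (δ := 0) (ε := 0) hcont
      (fun t ht => (hderiv t ht).hasDerivWithinAt)
      (by
        rw [Real.norm_eq_abs]
        simp only [hhdef]
        rw [show a + b - a = b by ring, hgb, abs_zero])
      (fun t ht => by
        rw [Real.norm_eq_abs, Real.norm_eq_abs,
          abs_of_nonneg (Real.rpow_nonneg (abs_nonneg _) q), add_zero]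
        exact hK _ (hmem t (Ico_subset_Icc_self ht)))
    have hb2 := hgr b (right_mem_Icc.mpr hab)
    rw [gronwallBound_ε0_δ0, Real.norm_eq_abs] at hb2
    have : h b = 0 := abs_eq_zero.mp (le_antisymm hb2 (abs_nonneg _))
    simpa [hhdef, show a + b - b = a by ring] using this
  -- Rolle
  obtain ⟨x0, hx0, hux0⟩ := exists_deriv_eq_zero (by norm_num : (0:ℝ) < 1) hVcont
    (hV0.trans hV1.symm)
  have hgx0 : g x0 = 0 := by
    rw [hgdef]; simp only []
    rw [show u x0 = 0 from hux0]
    simp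
  have key : ∀ x ∈ Ioo (0:ℝ) 1, g x = 0 := by
    intro x hx
    rcases le_total x0 x with h | h
    · exact fwd x0 x hx0 hx h hgx0
    · exact bwd x x0 hx hx0 h hgx0
  have hu0 : ∀ x ∈ Ioo (0:ℝ) 1, u x = 0 := by
    intro x hx
    by_contra h
    have h0 : 0 < |u x| := abs_pos.mpr h
    have h1 := habs x
    rw [key x hx, abs_zero] at h1
    exact absurd h1.symm (ne_of_gt (Real.rpow_pos_of_pos h0 _))
  -- V constant on Ioo
  have hconst : ∀ x ∈ Ioo (0:ℝ) 1, ∀ y ∈ Ioo (0:ℝ) 1, x ≤ y → V y = V x := by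
    intro x hx y hy hxy
    have hsub : Icc x y ⊆ Ioo 0 1 := fun t ht =>
      ⟨lt_of_lt_of_le hx.1 ht.1, lt_of_le_of_lt ht.2 hy.2⟩
    have := constant_of_has_deriv_right_zero (f := V)
      (hVcont.mono (hsub.trans Ioo_subset_Icc_self))
      (fun t ht => by
        have hm := hsub (Ico_subset_Icc_self ht)
        have hd := hVdiffAt t hm
        rw [hu0 t hm] at hd
        exact hd.hasDerivWithinAt)
    exact this y (right_mem_Icc.mpr hxy)
  -- conclude via continuity at 0
  have hlim : ∀ x ∈ Ioo (0:ℝ) 1, V x = 0 := by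
    intro x hx
    have hVx : ∀ᶠ y in nhdsWithin (0:ℝ) (Ioo 0 1), V y = V x := by
      filter_upwards [self_mem_nhdsWithin] with y hy
      rcases le_total y x with h | h
      · exact (hconst y hy x hx h).symm
      · exact hconst x hx y hy h
    have hne : (nhdsWithin (0:ℝ) (Ioo 0 1)).NeBot := by
      apply mem_closure_iff_nhdsWithin_neBot.mp
      rw [closure_Ioo (by norm_num : (0:ℝ) ≠ 1)]
      exact ⟨le_refl 0, by norm_num⟩
    have h1 : Tendsto V (nhdsWithin (0:ℝ) (Ioo 0 1)) (nhds (V 0)) :=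
      (hVcont 0 (by constructor <;> norm_num)).mono_left
        (nhdsWithin_mono 0 Ioo_subset_Icc_self)
    have h2 : Tendsto V (nhdsWithin (0:ℝ) (Ioo 0 1)) (nhds (V x)) :=
      tendsto_const_nhds.congr' (hVx.mono fun y hy => hy.symm)
    have := tendsto_nhds_unique h2 h1
    rw [hV0] at this
    exact this
  intro x hx
  rcases eq_or_lt_of_le hx.1 with h | h
  · rw [← h]; exact hV0
  rcases eq_or_lt_of_le hx.2 with h' | h'
  · rw [h']; exact hV1
  exact hlim x ⟨h, h'⟩
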